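/- arXiv:1102.0020 — 2 statements merged into one kernel-verified Lean document; each statement's English description precedes it below -/
import Mathlib

section
/- Let K = 𝔽₂. Suppose given ℤ-indexed chain complexes of K-vector spaces B^∞ and B^n for each integer n ≥ 0 such that: (i) dim_K H_m(B^∞) = 1 for every m ≥ 0 and H_m(B^∞) = 0 for every m < 0; (ii) dim_K H_0(B^0) = 1 and H_m(B^0) = 0 for every m ≠ 0; (iii) for each n ≥ 1 there is a short exact sequence of chain complexes 0 → B^0 → B^n → Σ B^{n-1} → 0; and (iv) for each n ≥ 0 there is a short exact sequence of chain complexes 0 → B^n → B^∞ → Σ^{n+1} B^∞ → 0. Then for every n ≥ 0 and every integer m: dim_K H_m(B^n) = 1 if 0 ≤ m ≤ n, and H_m(B^n) = 0 otherwise. -/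
open CategoryTheory

noncomputable section

/-- `K = 𝔽₂`, the field with two elements. -/
abbrev Ktwo : Type := ZMod 2

/-- `π = {1, σ}`, the group of order two, written multiplicatively. -/
abbrev PiGrp : Type := Multiplicative (ZMod 2)

/-- The group algebra `Kπ`. -/
abbrev KPi : Type := MonoidAlgebra Ktwo PiGrp

/-- The generator `σ` of `π`, viewed in the group algebra `Kπ`. -/
def sigmaEl : KPi := MonoidAlgebra.of Ktwo PiGrp (Multiplicative.ofAdd 1)

/-- The element `1 + σ` of `Kπ`. -/
def tEl : KPi := 1 + sigmaEl

lemma KPi_add_self (x : KPi) : x + x = 0 := by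
  rw [← two_smul Ktwo x, show (2 : Ktwo) = 0 by decide, zero_smul]

lemma tEl_mul_tEl : tEl * tEl = 0 := by
  have h1 : sigmaEl * sigmaEl = 1 := by
    rw [sigmaEl, ← map_mul,
      show (Multiplicative.ofAdd (1 : ZMod 2)) * Multiplicative.ofAdd 1 = 1 by decide, map_one]
  have h2 : tEl * tEl = (1 + sigmaEl * sigmaEl) + (sigmaEl + sigmaEl) := by rw [tEl]; ring
  rw [h2, h1, KPi_add_self, KPi_add_self, add_zero]

section Builders

variable {A : Type} [CommRing A] {V : Type} [AddCommGroup V] [Module A V]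

/-- The modules of the truncated complex: `V` in degrees `0 ≤ i ≤ n`, zero elsewhere,
realized as submodules of `V`. -/
def stripS (A : Type) [CommRing A] (V : Type) [AddCommGroup V] [Module A V] (n : ℤ) :
    ℤ → Submodule A V := fun i => if 0 ≤ i ∧ i ≤ n then ⊤ else ⊥

/-- The chain complex which is `V` in degrees `0 ≤ i ≤ n` and zero elsewhere, with every
differential equal to the square-zero endomorphism `f`. -/
def stripC (f : V →ₗ[A] V) (hf : ∀ x, f (f x) = 0) (n : ℤ) :
    ChainComplex (ModuleCat A) ℤ where
  X i := ModuleCat.of A ↥(stripS A V n i)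
  d i j :=
    if h : j + 1 = i ∧ 1 ≤ i ∧ i ≤ n then
      ModuleCat.ofHom (f.restrict (p := stripS A V n i) (q := stripS A V n j) (fun x _ => by
        have hj : 0 ≤ j ∧ j ≤ n := by omega
        simp [stripS, hj]))
    else 0
  shape i j hij := dif_neg (by
    simp only [ComplexShape.down_Rel] at hij
    tauto)
  d_comp_d' i j k hij hjk := by
    try dsimp only
    by_cases h1 : j + 1 = i ∧ 1 ≤ i ∧ i ≤ n
    · by_cases h2 : k + 1 = j ∧ 1 ≤ j ∧ j ≤ n
      · rw [dif_pos h1, dif_pos h2]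
        ext x
        try refine Subtype.ext ?_
        exact hf x.1
      · rw [dif_neg h2, CategoryTheory.Limits.comp_zero]
    · rw [dif_neg h1, CategoryTheory.Limits.zero_comp]

/-- The modules of the unbounded-above complex: `V` in degrees `i ≥ 0`, zero elsewhere. -/
def rayS (A : Type) [CommRing A] (V : Type) [AddCommGroup V] [Module A V] :
    ℤ → Submodule A V := fun i => if 0 ≤ i then ⊤ else ⊥

/-- The chain complex which is `V` in degrees `i ≥ 0` and zero elsewhere, with every
differential equal to the square-zero endomorphism `f`. -/
def rayC (f : V →ₗ[A] V) (hf : ∀ x, f (f x) = 0) :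
    ChainComplex (ModuleCat A) ℤ where
  X i := ModuleCat.of A ↥(rayS A V i)
  d i j :=
    if h : j + 1 = i ∧ 1 ≤ i then
      ModuleCat.ofHom (f.restrict (p := rayS A V i) (q := rayS A V j) (fun x _ => by
        have hj : 0 ≤ j := by omega
        simp [rayS, hj]))
    else 0
  shape i j hij := dif_neg (by
    simp only [ComplexShape.down_Rel] at hij
    tauto)
  d_comp_d' i j k hij hjk := by
    try dsimp only
    by_cases h1 : j + 1 = i ∧ 1 ≤ i
    · by_cases h2 : k + 1 = j ∧ 1 ≤ j
      · rw [dif_pos h1, dif_pos h2]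
        ext x
        try refine Subtype.ext ?_
        exact hf x.1
      · rw [dif_neg h2, CategoryTheory.Limits.comp_zero]
    · rw [dif_neg h1, CategoryTheory.Limits.zero_comp]

/-- The `k`-fold suspension `Σ^k C` of a chain complex, with `(Σ^k C)_i = C_{i-k}`. -/
def shiftC (k : ℤ) (C : ChainComplex (ModuleCat A) ℤ) : ChainComplex (ModuleCat A) ℤ where
  X i := C.X (i - k)
  d i j := C.d (i - k) (j - k)
  shape i j hij := C.shape _ _ (fun hc => hij (by
    simp only [ComplexShape.down_Rel] at hc ⊢
    omega))
  d_comp_d' i j l _ _ := C.d_comp_d _ _ _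

end Builders

open Limits

section Aux
lemma aux_comp_zero {X Y Z : ChainComplex (ModuleCat Ktwo) ℤ} (f : X ⟶ Y) (g : Y ⟶ Z)
    (h : ∀ i : ℤ, Function.Injective (⇑(f.f i)) ∧ Function.Exact (⇑(f.f i)) (⇑(g.f i)) ∧
      Function.Surjective (⇑(g.f i))) : f ≫ g = 0 := by
  ext i x
  exact (h i).2.1.apply_apply_eq_zero x

lemma aux_ses {X Y Z : ChainComplex (ModuleCat Ktwo) ℤ} (f : X ⟶ Y) (g : Y ⟶ Z)
    (h : ∀ i : ℤ, Function.Injective (⇑(f.f i)) ∧ Function.Exact (⇑(f.f i)) (⇑(g.f i)) ∧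
      Function.Surjective (⇑(g.f i))) :
    (ShortComplex.mk f g (aux_comp_zero f g h)).ShortExact := by
  apply HomologicalComplex.shortExact_of_degreewise_shortExact
  intro i
  exact ShortComplex.ShortExact.mk'
    ((ShortComplex.ShortExact.moduleCat_exact_iff_function_exact _).2 (h i).2.1)
    ((ModuleCat.mono_iff_injective _).2 (h i).1)
    ((ModuleCat.epi_iff_surjective _).2 (h i).2.2)

noncomputable def shiftScIso (k : ℤ) (C : ChainComplex (ModuleCat Ktwo) ℤ) (m : ℤ) :
    (shiftC k C).sc m ≅ C.sc (m - k) :=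
  ShortComplex.isoMk
    (C.XIsoOfEq (show (ComplexShape.down ℤ).prev m - k = (ComplexShape.down ℤ).prev (m - k) by
      simp only [ChainComplex.prev]; omega))
    (Iso.refl _)
    (C.XIsoOfEq (show (ComplexShape.down ℤ).next m - k = (ComplexShape.down ℤ).next (m - k) by
      simp only [ChainComplex.next]; omega))
    (by dsimp [HomologicalComplex.sc, HomologicalComplex.sc', shiftC]; erw [Category.comp_id]; exact HomologicalComplex.XIsoOfEq_hom_comp_d _ _ _)
    (by dsimp [HomologicalComplex.sc, HomologicalComplex.sc', shiftC]; erw [Category.id_comp]; exact (HomologicalComplex.d_comp_XIsoOfEq_hom _ _ _).symm)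

noncomputable def shiftHomologyIso (k : ℤ) (C : ChainComplex (ModuleCat Ktwo) ℤ) (m : ℤ) :
    (shiftC k C).homology m ≅ C.homology (m - k) :=
  ShortComplex.homologyMapIso (shiftScIso k C m)

lemma aux_inj {X Y : ModuleCat Ktwo} (f : X ⟶ Y) (hX : Module.finrank Ktwo X = 1)
    (hY : Module.finrank Ktwo Y = 1) (hf : Function.Surjective f) : Function.Injective f := by
  have : FiniteDimensional Ktwo X := FiniteDimensional.of_finrank_pos (by omega)
  have h := LinearMap.finrank_range_add_finrank_ker f.hom
  rw [LinearMap.range_eq_top.2 hf, finrank_top, hX, hY] at h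
  change Function.Injective f.hom
  rw [← LinearMap.ker_eq_bot]
  exact Submodule.finrank_eq_zero.1 (by omega)
end Aux
/-- The long-exact-sequence induction: given complexes `B^∞` and `B^n`
(`n ≥ 0`) of `K`-vector spaces such that `H_m(B^∞)` is one-dimensional for `m ≥ 0` and zero
for `m < 0`, `H_m(B^0)` is one-dimensional for `m = 0` and zero otherwise, and short exact
sequences `0 → B^0 → B^n → Σ B^{n-1} → 0` (for `n ≥ 1`) and `0 → B^n → B^∞ → Σ^{n+1} B^∞ → 0`,
then `H_m(B^n)` is one-dimensional for `0 ≤ m ≤ n` and zero otherwise. -/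
theorem statement6 (Binf : ChainComplex (ModuleCat Ktwo) ℤ)
    (B : ℕ → ChainComplex (ModuleCat Ktwo) ℤ)
    (hinf1 : ∀ m : ℤ, 0 ≤ m → Module.finrank Ktwo ↥(Binf.homology m) = 1)
    (hinf0 : ∀ m : ℤ, m < 0 → CategoryTheory.Limits.IsZero (Binf.homology m))
    (hB0 : Module.finrank Ktwo ↥((B 0).homology 0) = 1)
    (hB0' : ∀ m : ℤ, m ≠ 0 → CategoryTheory.Limits.IsZero ((B 0).homology m))
    (hses1 : ∀ n : ℕ, 1 ≤ n →
      ∃ (f : B 0 ⟶ B n) (g : B n ⟶ shiftC 1 (B (n - 1))),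
        ∀ i : ℤ, Function.Injective (⇑(f.f i)) ∧ Function.Exact (⇑(f.f i)) (⇑(g.f i)) ∧
          Function.Surjective (⇑(g.f i)))
    (hses2 : ∀ n : ℕ,
      ∃ (f : B n ⟶ Binf) (g : Binf ⟶ shiftC ((n : ℤ) + 1) Binf),
        ∀ i : ℤ, Function.Injective (⇑(f.f i)) ∧ Function.Exact (⇑(f.f i)) (⇑(g.f i)) ∧
          Function.Surjective (⇑(g.f i))) :
    ∀ (n : ℕ) (m : ℤ),
      (0 ≤ m ∧ m ≤ (n : ℤ) → Module.finrank Ktwo ↥((B n).homology m) = 1) ∧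
      (m < 0 ∨ (n : ℤ) < m → CategoryTheory.Limits.IsZero ((B n).homology m)) := by
  have hdim0 : ∀ N : ℕ, 1 ≤ N → Module.finrank Ktwo ↥((B N).homology 0) = 1 := by
    intro N hN
    obtain ⟨f, g, hfg⟩ := hses2 N
    have hS := aux_ses f g hfg
    set S := ShortComplex.mk f g (aux_comp_zero f g hfg) with hSdef
    have hz1 : IsZero ((shiftC ((N : ℤ) + 1) Binf).homology 1) :=
      (hinf0 (1 - ((N : ℤ) + 1)) (by omega)).of_iso (shiftHomologyIso ((N : ℤ) + 1) Binf 1)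
    have hz0 : IsZero ((shiftC ((N : ℤ) + 1) Binf).homology 0) :=
      (hinf0 (0 - ((N : ℤ) + 1)) (by omega)).of_iso (shiftHomologyIso ((N : ℤ) + 1) Binf 0)
    have h10 : (ComplexShape.down ℤ).Rel (1 : ℤ) 0 := by simp
    haveI hmono : Mono (HomologicalComplex.homologyMap S.f 0) :=
      (hS.homology_exact₁ 1 0 h10).mono_g (hz1.eq_of_src _ _)
    haveI hepi : Epi (HomologicalComplex.homologyMap S.f 0) :=
      (hS.homology_exact₂ 0).epi_f (hz0.eq_of_tgt _ _)
    haveI : IsIso (HomologicalComplex.homologyMap S.f 0) := isIso_of_mono_of_epi _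
    have e1 : Module.finrank Ktwo ↥((B N).homology 0)
        = Module.finrank Ktwo ↥(Binf.homology 0) :=
      (asIso (HomologicalComplex.homologyMap S.f 0)).toLinearEquiv.finrank_eq
    rw [e1]
    exact hinf1 0 le_rfl
  intro n
  induction n with
  | zero =>
    intro m
    refine ⟨fun hm => ?_, fun hm => hB0' m (by omega)⟩
    obtain rfl : m = 0 := by omega
    exact hB0
  | succ n ih =>
    obtain ⟨f, g, hfg⟩ := hses1 (n + 1) (by omega)
    have hS := aux_ses f g hfg
    set S := ShortComplex.mk f g (aux_comp_zero f g hfg) with hSdef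
    intro m
    constructor
    · rintro ⟨hm0, hm1⟩
      rcases eq_or_lt_of_le hm0 with hm | hm
      · obtain rfl : m = 0 := hm.symm
        exact hdim0 (n + 1) (by omega)
      · haveI hmono : Mono (HomologicalComplex.homologyMap S.g m) :=
          (hS.homology_exact₂ m).mono_g ((hB0' m (by omega)).eq_of_src _ _)
        have hrel : (ComplexShape.down ℤ).Rel m (m - 1) := by simp
        have hδ : hS.δ m (m - 1) hrel = 0 := by
          by_cases hm1' : m = 1
          · have e0 : m - 1 = 0 := by omega
            haveI hfm : Mono (HomologicalComplex.homologyMap S.f (m - 1)) := by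
              rw [ModuleCat.mono_iff_injective]
              apply aux_inj
              · rw [e0]; exact hB0
              · rw [e0]; exact hdim0 (n + 1) (by omega)
              · have hz : IsZero ((shiftC 1 (B n)).homology (m - 1)) :=
                  ((ih (m - 1 - 1)).2 (by omega)).of_iso (shiftHomologyIso 1 (B n) (m - 1))
                haveI : Epi (HomologicalComplex.homologyMap S.f (m - 1)) :=
                  (hS.homology_exact₂ (m - 1)).epi_f (hz.eq_of_tgt _ _)
                exact (ModuleCat.epi_iff_surjective _).1 this
            rw [← cancel_mono (HomologicalComplex.homologyMap S.f (m - 1)), zero_comp]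
            exact hS.δ_comp m (m - 1) hrel
          · exact ((hB0' (m - 1) (by omega)).eq_of_tgt _ _)
        haveI hepi : Epi (HomologicalComplex.homologyMap S.g m) :=
          (hS.homology_exact₃ m (m - 1) hrel).epi_f hδ
        haveI : IsIso (HomologicalComplex.homologyMap S.g m) := isIso_of_mono_of_epi _
        have e1 : Module.finrank Ktwo ↥((B (n + 1)).homology m)
            = Module.finrank Ktwo ↥((shiftC 1 (B n)).homology m) :=
          (asIso (HomologicalComplex.homologyMap S.g m)).toLinearEquiv.finrank_eq
        have e2 : Module.finrank Ktwo ↥((shiftC 1 (B n)).homology m)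
            = Module.finrank Ktwo ↥((B n).homology (m - 1)) :=
          (shiftHomologyIso 1 (B n) m).toLinearEquiv.finrank_eq
        rw [e1, e2]
        exact (ih (m - 1)).1 ⟨by omega, by omega⟩
    · intro hm
      have h1 : IsZero ((B 0).homology m) := hB0' m (by omega)
      have h3 : IsZero ((shiftC 1 (B n)).homology m) :=
        ((ih (m - 1)).2 (by omega)).of_iso (shiftHomologyIso 1 (B n) m)
      haveI hmono : Mono (HomologicalComplex.homologyMap S.g m) :=
        (hS.homology_exact₂ m).mono_g (h1.eq_of_src _ _)
      exact IsZero.of_mono (HomologicalComplex.homologyMap S.g m) h3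

end
end

section
/- Let X and Y be vector spaces over K = 𝔽₂. For a K-vector space Z, let τ_Z denote the K-linear involution of Z ⊗_K Z that swaps the two tensor factors, and write (Z ⊗ Z)_π = (Z ⊗ Z)/im(1 + τ_Z) for the coinvariants. Then there is a K-linear isomorphism ((X ⊕ Y) ⊗ (X ⊕ Y))_π ≅ (X ⊗ X)_π ⊕ (Y ⊗ Y)_π ⊕ (X ⊗ Y) which sends the class of (x, y) ⊗ (x', y') to ([x ⊗ x'], [y ⊗ y'], x ⊗ y' + x' ⊗ y). -/
open CategoryTheory

noncomputable section

open scoped TensorProduct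

/-- The transposition `τ` of `Z ⊗ Z`, swapping the two tensor factors. -/
def tau (Z : Type) [AddCommGroup Z] [Module Ktwo Z] :
    (Z ⊗[Ktwo] Z) →ₗ[Ktwo] (Z ⊗[Ktwo] Z) :=
  (TensorProduct.comm Ktwo Z Z).toLinearMap

/-- The map `1 + τ` on `Z ⊗ Z`. -/
def onePlusTau (Z : Type) [AddCommGroup Z] [Module Ktwo Z] :
    (Z ⊗[Ktwo] Z) →ₗ[Ktwo] (Z ⊗[Ktwo] Z) :=
  LinearMap.id + tau Z

/-- The coinvariants `(Z ⊗ Z)_π = (Z ⊗ Z)/im(1 + τ)`. -/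
abbrev coinv (Z : Type) [AddCommGroup Z] [Module Ktwo Z] :=
  (Z ⊗[Ktwo] Z) ⧸ LinearMap.range (onePlusTau Z)

section Aux

lemma mod2_add_self {M : Type*} [AddCommGroup M] [Module Ktwo M] (m : M) : m + m = 0 := by
  rw [← two_smul Ktwo m, show (2 : Ktwo) = 0 by decide, zero_smul]

variable {Z W : Type} [AddCommGroup Z] [Module Ktwo Z] [AddCommGroup W] [Module Ktwo W]

lemma tau_tmul (a b : Z) : tau Z (a ⊗ₜ[Ktwo] b) = b ⊗ₜ[Ktwo] a := rfl

lemma tau_tau (t : Z ⊗[Ktwo] Z) : tau Z (tau Z t) = t := by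
  induction t with
  | zero => simp
  | tmul a b => rfl
  | add s t hs ht => simp only [map_add, hs, ht]

lemma map2_tau (f : Z →ₗ[Ktwo] W) (t : Z ⊗[Ktwo] Z) :
    TensorProduct.map f f (tau Z t) = tau W (TensorProduct.map f f t) := by
  induction t with
  | zero => simp
  | tmul a b => rfl
  | add s t hs ht => simp [map_add, hs, ht]

lemma onePlusTau_apply (t : Z ⊗[Ktwo] Z) : onePlusTau Z t = t + tau Z t := rfl

/-- The map on coinvariants induced by `f ⊗ f`. -/
def coinvMap (f : Z →ₗ[Ktwo] W) : coinv Z →ₗ[Ktwo] coinv W :=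
  Submodule.liftQ _
    ((LinearMap.range (onePlusTau W)).mkQ.comp (TensorProduct.map f f)) (by
      rintro _ ⟨t, rfl⟩
      simp only [LinearMap.mem_ker, LinearMap.comp_apply, onePlusTau_apply, map_add,
        map2_tau, Submodule.mkQ_apply]
      rw [← Submodule.Quotient.mk_add, Submodule.Quotient.mk_eq_zero]
      exact ⟨TensorProduct.map f f t, rfl⟩)

lemma coinvMap_mk (f : Z →ₗ[Ktwo] W) (t : Z ⊗[Ktwo] Z) :
    coinvMap f (Submodule.Quotient.mk t) = Submodule.Quotient.mk (TensorProduct.map f f t) :=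
  rfl

lemma mk_tau (t : Z ⊗[Ktwo] Z) :
    (Submodule.Quotient.mk (tau Z t) : coinv Z) = Submodule.Quotient.mk t := by
  rw [Submodule.Quotient.eq]
  refine ⟨t, ?_⟩
  have : tau Z t - t = t + tau Z t := by
    rw [sub_eq_add_neg, add_comm]
    congr 1
    exact neg_eq_of_add_eq_zero_left (mod2_add_self t)
  rw [onePlusTau_apply, ← this]

end Aux

/-- For `K`-vector spaces `X` and `Y` there is a `K`-linear isomorphism
`((X ⊕ Y) ⊗ (X ⊕ Y))_π ≅ (X ⊗ X)_π ⊕ (Y ⊗ Y)_π ⊕ (X ⊗ Y)` sending the class of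
`(x, y) ⊗ (x', y')` to `([x ⊗ x'], [y ⊗ y'], x ⊗ y' + x' ⊗ y)`. -/
theorem statement7 (X Y : Type) [AddCommGroup X] [Module Ktwo X]
    [AddCommGroup Y] [Module Ktwo Y] :
    ∃ e : coinv (X × Y) ≃ₗ[Ktwo] (coinv X × coinv Y × (X ⊗[Ktwo] Y)),
      ∀ (x x' : X) (y y' : Y),
        e (Submodule.Quotient.mk (((x, y) : X × Y) ⊗ₜ[Ktwo] ((x', y') : X × Y))) =
          (Submodule.Quotient.mk (x ⊗ₜ[Ktwo] x'), Submodule.Quotient.mk (y ⊗ₜ[Ktwo] y'),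
            x ⊗ₜ[Ktwo] y' + x' ⊗ₜ[Ktwo] y) := by
  classical
  let fst := LinearMap.fst Ktwo X Y
  let snd := LinearMap.snd Ktwo X Y
  let inl := LinearMap.inl Ktwo X Y
  let inr := LinearMap.inr Ktwo X Y
  have hF3 : LinearMap.range (onePlusTau (X × Y)) ≤
      LinearMap.ker ((TensorProduct.map fst snd).comp (onePlusTau (X × Y))) := by
    rintro _ ⟨t, rfl⟩
    have h0 : onePlusTau (X × Y) (onePlusTau (X × Y) t) = 0 := by
      rw [onePlusTau_apply, onePlusTau_apply, map_add, tau_tau,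
        show t + tau (X × Y) t + (tau (X × Y) t + t) =
          (t + tau (X × Y) t) + (t + tau (X × Y) t) from by abel]
      exact mod2_add_self _
    simp [LinearMap.mem_ker, h0]
  let F3 : coinv (X × Y) →ₗ[Ktwo] X ⊗[Ktwo] Y :=
    Submodule.liftQ _ ((TensorProduct.map fst snd).comp (onePlusTau (X × Y))) hF3
  let F : coinv (X × Y) →ₗ[Ktwo] coinv X × coinv Y × (X ⊗[Ktwo] Y) :=
    (coinvMap fst).prod ((coinvMap snd).prod F3)
  have hF : ∀ (x x' : X) (y y' : Y),
      F (Submodule.Quotient.mk (((x, y) : X × Y) ⊗ₜ[Ktwo] ((x', y') : X × Y))) =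
        (Submodule.Quotient.mk (x ⊗ₜ[Ktwo] x'), Submodule.Quotient.mk (y ⊗ₜ[Ktwo] y'),
          x ⊗ₜ[Ktwo] y' + x' ⊗ₜ[Ktwo] y) := by
    intro x x' y y'
    simp only [F, LinearMap.prod_apply, Pi.prod, coinvMap_mk, F3, Submodule.liftQ_apply,
      LinearMap.comp_apply, onePlusTau_apply, tau_tmul, map_add, TensorProduct.map_tmul]
    rfl
  let G3 : (X ⊗[Ktwo] Y) →ₗ[Ktwo] coinv (X × Y) :=
    (LinearMap.range (onePlusTau (X × Y))).mkQ.comp (TensorProduct.map inl inr)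
  let G : (coinv X × coinv Y × (X ⊗[Ktwo] Y)) →ₗ[Ktwo] coinv (X × Y) :=
    (coinvMap inl).coprod ((coinvMap inr).coprod G3)
  have hGF : ∀ (x x' : X) (y y' : Y),
      G (F (Submodule.Quotient.mk (((x, y) : X × Y) ⊗ₜ[Ktwo] ((x', y') : X × Y)))) =
        Submodule.Quotient.mk (((x, y) : X × Y) ⊗ₜ[Ktwo] ((x', y') : X × Y)) := by
    intro x x' y y'
    rw [hF]
    simp only [G, G3, LinearMap.coprod_apply, coinvMap_mk, LinearMap.comp_apply,
      Submodule.mkQ_apply, map_add, TensorProduct.map_tmul]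
    have hxy : ((x, y) : X × Y) = inl x + inr y := by simp [inl, inr]
    have hxy' : ((x', y') : X × Y) = inl x' + inr y' := by simp [inl, inr]
    rw [hxy, hxy', TensorProduct.add_tmul, TensorProduct.tmul_add, TensorProduct.tmul_add]
    have hsw : (Submodule.Quotient.mk ((inl x' : X × Y) ⊗ₜ[Ktwo] (inr y : X × Y)) :
        coinv (X × Y)) = Submodule.Quotient.mk ((inr y : X × Y) ⊗ₜ[Ktwo] (inl x' : X × Y)) := by
      rw [← tau_tmul, mk_tau]
    rw [hsw]
    simp only [← Submodule.Quotient.mk_add]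
    congr 1
    abel
  have key : ∀ t : (X × Y) ⊗[Ktwo] (X × Y),
      G (F (Submodule.Quotient.mk t)) = Submodule.Quotient.mk t := by
    intro t
    induction t with
    | zero => simp
    | tmul a b => exact hGF a.1 b.1 a.2 b.2
    | add s t hs ht =>
      rw [Submodule.Quotient.mk_add, map_add, map_add, hs, ht]
  have hGFid : G.comp F = LinearMap.id := by
    apply Submodule.linearMap_qext
    apply LinearMap.ext
    intro t
    exact key t
  have hFGid : F.comp G = LinearMap.id := by
    apply LinearMap.ext
    rintro ⟨p, q, r⟩
    have hp : F (G (p, 0, 0)) = (p, 0, 0) := by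
      induction p using Submodule.Quotient.induction_on with
      | H t =>
        induction t with
        | zero => simp only [Submodule.Quotient.mk_zero]; exact (congrArg F (map_zero G)).trans (map_zero F)
        | tmul a b =>
          have : G ((Submodule.Quotient.mk (a ⊗ₜ[Ktwo] b) : coinv X), 0, 0) =
              Submodule.Quotient.mk ((inl a : X × Y) ⊗ₜ[Ktwo] (inl b : X × Y)) := by
            simp [G, coinvMap_mk]
          rw [this, show ((inl a : X × Y)) = ((a, 0) : X × Y) from rfl,
            show ((inl b : X × Y)) = ((b, 0) : X × Y) from rfl, hF]
          simp
        | add s t hs ht =>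
          rw [show ((Submodule.Quotient.mk (s + t) : coinv X), (0 : coinv Y),
              (0 : X ⊗[Ktwo] Y)) = ((Submodule.Quotient.mk s : coinv X), 0, 0) +
              ((Submodule.Quotient.mk t : coinv X), 0, 0) from by
                simp [Prod.ext_iff, Submodule.Quotient.mk_add],
            map_add, map_add, hs, ht]
    have hq : F (G (0, q, 0)) = (0, q, 0) := by
      induction q using Submodule.Quotient.induction_on with
      | H t =>
        induction t with
        | zero => simp only [Submodule.Quotient.mk_zero]; exact (congrArg F (map_zero G)).trans (map_zero F)
        | tmul a b =>
          have : G (0, (Submodule.Quotient.mk (a ⊗ₜ[Ktwo] b) : coinv Y), 0) =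
              Submodule.Quotient.mk ((inr a : X × Y) ⊗ₜ[Ktwo] (inr b : X × Y)) := by
            simp [G, coinvMap_mk]
          rw [this, show ((inr a : X × Y)) = ((0, a) : X × Y) from rfl,
            show ((inr b : X × Y)) = ((0, b) : X × Y) from rfl, hF]
          simp
        | add s t hs ht =>
          rw [show ((0 : coinv X), (Submodule.Quotient.mk (s + t) : coinv Y),
              (0 : X ⊗[Ktwo] Y)) = (0, (Submodule.Quotient.mk s : coinv Y), 0) +
              (0, (Submodule.Quotient.mk t : coinv Y), 0) by
                rw [Submodule.Quotient.mk_add]; simp [Prod.ext_iff],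
            map_add, map_add, hs, ht]
    have hr : F (G (0, 0, r)) = (0, 0, r) := by
      induction r with
      | zero => exact (congrArg F (map_zero G)).trans (map_zero F)
      | tmul a b =>
        have : G (0, 0, a ⊗ₜ[Ktwo] b) =
            Submodule.Quotient.mk ((inl a : X × Y) ⊗ₜ[Ktwo] (inr b : X × Y)) := by
          simp [G, G3]
        rw [this, show ((inl a : X × Y)) = ((a, 0) : X × Y) from rfl,
          show ((inr b : X × Y)) = ((0, b) : X × Y) from rfl, hF]
        simp
      | add s t hs ht =>
        rw [show ((0 : coinv X), (0 : coinv Y), s + t) = (0, 0, s) + (0, 0, t) by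
          simp [Prod.ext_iff], map_add, map_add, hs, ht]
    have hsplit : ((p, q, r) : coinv X × coinv Y × (X ⊗[Ktwo] Y)) =
        (p, 0, 0) + (0, q, 0) + (0, 0, r) := by simp [Prod.ext_iff]
    simp only [LinearMap.comp_apply, LinearMap.id_apply]
    rw [hsplit, map_add, map_add, map_add, map_add, hp, hq, hr]
  exact ⟨LinearEquiv.ofLinear F G hFGid hGFid, fun x x' y y' => hF x x' y y'⟩

end
end
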